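/- arXiv:2507.10995 — 5 statements merged into one kernel-verified Lean document; each statement's English description precedes it below -/
import Mathlib

section
/- Suppose V : S → ℝ satisfies the Poisson equation V = r − r_*·e + P V with P row-stochastic, and suppose r is not constant. Then V is not equivalent to −r; that is, there exist no m > 0 and d ∈ ℝ with V = −m·r + d·e. -/
open Matrix

/-- If `V` satisfies the Poisson equation `V = r - r_* e + P V` with `P` row-stochastic and
`r` is not constant, then `V` is not equivalent to `-r`: there are no `m > 0` and `d ∈ ℝ`
with `V = -m r + d e`. -/
theorem value_not_equivalent_to_neg_reward
    {S : Type*} [Fintype S]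
    (P : Matrix S S ℝ) (hPnn : ∀ s s', 0 ≤ P s s') (hProw : ∀ s, ∑ s', P s s' = 1)
    (r V : S → ℝ) (rstar : ℝ)
    (hpoisson : ∀ s, V s = r s - rstar + (P.mulVec V) s)
    (hrnc : ¬ ∃ a : ℝ, ∀ s, r s = a) :
    ¬ ∃ m > (0 : ℝ), ∃ d : ℝ, ∀ s, V s = -m * r s + d := by
  rintro ⟨m, hm, d, hV⟩
  have key : ∀ s, (1 + m) * r s = rstar + m * (P.mulVec r) s := by
    intro s
    have h1 := hpoisson s
    have h2 : (P.mulVec V) s = -m * (P.mulVec r) s + d := by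
      simp only [mulVec, dotProduct]
      have : ∀ s', P s s' * V s' = (-m) * (P s s' * r s') + d * P s s' := by
        intro s'
        rw [hV s']; ring
      rw [Finset.sum_congr rfl (fun s' _ => this s')]
      rw [Finset.sum_add_distrib, ← Finset.mul_sum, ← Finset.mul_sum, hProw s]
      ring
    rw [hV s, h2] at h1
    linarith
  cases isEmpty_or_nonempty S with
  | inl h => exact hrnc ⟨0, fun s => (h.false s).elim⟩
  | inr h =>
    have hPle : ∀ s c, (∀ s', r s' ≤ c) → (P.mulVec r) s ≤ c := by
      intro s c hc
      simp only [mulVec, dotProduct]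
      calc ∑ s', P s s' * r s' ≤ ∑ s', P s s' * c := by
            apply Finset.sum_le_sum
            intro i _
            exact mul_le_mul_of_nonneg_left (hc i) (hPnn s i)
        _ = c := by rw [← Finset.sum_mul, hProw s, one_mul]
    have hPge : ∀ s c, (∀ s', c ≤ r s') → c ≤ (P.mulVec r) s := by
      intro s c hc
      simp only [mulVec, dotProduct]
      calc c = ∑ s', P s s' * c := by rw [← Finset.sum_mul, hProw s, one_mul]
        _ ≤ ∑ s', P s s' * r s' := by
            apply Finset.sum_le_sum
            intro i _
            exact mul_le_mul_of_nonneg_left (hc i) (hPnn s i)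
    obtain ⟨s0, _, h0⟩ := Finset.exists_max_image Finset.univ r Finset.univ_nonempty
    obtain ⟨s1, _, h1⟩ := Finset.exists_min_image Finset.univ r Finset.univ_nonempty
    have hmax : r s0 ≤ rstar := by
      have := hPle s0 (r s0) (fun s' => h0 s' (Finset.mem_univ s'))
      have hk := key s0
      nlinarith
    have hmin : rstar ≤ r s1 := by
      have := hPge s1 (r s1) (fun s' => h1 s' (Finset.mem_univ s'))
      have hk := key s1
      nlinarith
    refine hrnc ⟨rstar, fun s => le_antisymm ?_ ?_⟩
    · exact le_trans (h0 s (Finset.mem_univ s)) hmax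
    · exact le_trans hmin (h1 s (Finset.mem_univ s))
end

section
/- Let f, g1, g2 : S → ℝ (S finite) and suppose c·f + k = (1−β)·g1 + β·g2 for some c > 0, k ∈ ℝ, β ∈ [0,1]. If neither g1 nor g2 is constant, g1 is not equivalent to g2, and g1 is not equivalent to −g2, then β is unique: whenever c'·f + k' = (1−β')·g1 + β'·g2 with c' > 0, k' ∈ ℝ, β' ∈ [0,1], we have β' = β. -/
/-- Uniqueness of the degree of conflation `β`: if neither `g1` nor `g2` is constant,
`g1` is not equivalent to `g2`, and `g1` is not equivalent to `-g2`, then the `β` in a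
representation `c f + k = (1-β) g1 + β g2` (with `c > 0`, `β ∈ [0,1]`) is unique. -/
theorem conflation_degree_unique
    {S : Type*} [Fintype S]
    (f g1 g2 : S → ℝ)
    (hg1 : ¬ ∃ a : ℝ, ∀ s, g1 s = a)
    (hg2 : ¬ ∃ a : ℝ, ∀ s, g2 s = a)
    (hne : ¬ ∃ c > (0 : ℝ), ∃ k : ℝ, ∀ s, g1 s = c * g2 s + k)
    (hne' : ¬ ∃ c > (0 : ℝ), ∃ k : ℝ, ∀ s, g1 s = c * (-g2 s) + k)
    (c k β : ℝ) (hc : 0 < c) (hβ : β ∈ Set.Icc (0 : ℝ) 1)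
    (h : ∀ s, c * f s + k = (1 - β) * g1 s + β * g2 s)
    (c' k' β' : ℝ) (hc' : 0 < c') (hβ' : β' ∈ Set.Icc (0 : ℝ) 1)
    (h' : ∀ s, c' * f s + k' = (1 - β') * g1 s + β' * g2 s) :
    β' = β := by
  obtain ⟨A, hA⟩ : ∃ A : ℝ, A = c' * (1 - β) - c * (1 - β') := ⟨_, rfl⟩
  obtain ⟨B, hB⟩ : ∃ B : ℝ, B = c' * β - c * β' := ⟨_, rfl⟩
  have key : ∀ s, A * g1 s + B * g2 s = c' * k - c * k' := by
    intro s
    rw [hA, hB]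
    linear_combination c * h' s - c' * h s
  by_cases hBz : B = 0
  · have hAz : A = 0 := by
      by_contra hAz
      exact hg1 ⟨(c' * k - c * k') / A, fun s => by
        rw [eq_div_iff hAz]
        linear_combination key s - g2 s * hBz⟩
    have hcc : c' = c := by
      have hsum : A + B = c' - c := by rw [hA, hB]; ring
      rw [hAz, hBz] at hsum; linarith
    have hb : c' * β = c * β' := by rw [hB] at hBz; linarith
    rw [hcc] at hb
    exact (mul_left_cancel₀ (ne_of_gt hc) hb.symm)
  · by_cases hAz : A = 0
    · exact absurd ⟨(c' * k - c * k') / B, fun s => by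
        rw [eq_div_iff hBz]
        linear_combination key s - g1 s * hAz⟩ hg2
    · rcases lt_or_gt_of_ne (div_ne_zero hBz hAz : B / A ≠ 0) with hpos | hneg
      · exact absurd ⟨-B / A, by rw [neg_div]; linarith, (c' * k - c * k') / A,
          fun s => by
            rw [div_mul_eq_mul_div, ← add_div, eq_div_iff hAz]
            linear_combination key s⟩ hne
      · exact absurd ⟨B / A, hneg, (c' * k - c * k') / A,
          fun s => by
            rw [div_mul_eq_mul_div, ← add_div, eq_div_iff hAz]
            linear_combination key s⟩ hne'
end

section
/- In the three-state canonical MDP, the optimal average reward equals ε(M−1)/(1+2ε), attained by the policy that selects 'move' in states 1 and 2; its stationary distribution assigns probabilities (1/(1+2ε), ε/(1+2ε), ε/(1+2ε)) to states 1, 2, 3. -/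
/-- Transition probabilities of the canonical three-state MDP. States are `0, 1, 2`
(common state, instrumental goal, terminal goal); `true` is `move`, `false` is `stay`. -/
noncomputable def canonP (ε : ℝ) : Fin 3 → Bool → Fin 3 → ℝ := fun s a s' =>
  if s = 0 then (if s' = 1 then ε else if s' = 0 then 1 - ε else 0)
  else if s = 1 then
    (if a then (if s' = 2 then 1 else 0) else (if s' = 1 then 1 else 0))
  else (if s' = 0 then 1 else 0)

/-- Rewards of the canonical MDP: `r(1) = 0`, `r(2) = -1`, `r(3) = M`. -/
noncomputable def canonR (M : ℝ) : Fin 3 → ℝ := ![0, -1, M]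

/-- A (randomized) policy: a probability distribution over actions at each state. -/
def IsPolicy (π : Fin 3 → Bool → ℝ) : Prop :=
  (∀ s a, 0 ≤ π s a) ∧ ∀ s, ∑ a : Bool, π s a = 1

/-- `φ` is a stationary distribution of the Markov chain induced by policy `π`. -/
def IsStationaryCanon (ε : ℝ) (π : Fin 3 → Bool → ℝ) (φ : Fin 3 → ℝ) : Prop :=
  (∀ s, 0 ≤ φ s) ∧ (∑ s, φ s = 1) ∧
    ∀ s', ∑ s, φ s * (∑ a : Bool, π s a * canonP ε s a s') = φ s'

/-- The optimal average reward of the canonical MDP is `ε (M - 1) / (1 + 2ε)`, attained by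
the always-`move` policy, whose stationary distribution is
`(1/(1+2ε), ε/(1+2ε), ε/(1+2ε))`. -/
theorem canonical_optimal_average_reward
    (ε M : ℝ) (hε : ε ∈ Set.Ioo (0 : ℝ) 1) (hM : 1 ≤ M) :
    IsStationaryCanon ε (fun _ a => if a then 1 else 0)
      ![1 / (1 + 2 * ε), ε / (1 + 2 * ε), ε / (1 + 2 * ε)] ∧
    (∑ s, ![1 / (1 + 2 * ε), ε / (1 + 2 * ε), ε / (1 + 2 * ε)] s * canonR M s
        = ε * (M - 1) / (1 + 2 * ε)) ∧
    ∀ π φ, IsPolicy π → IsStationaryCanon ε π φ →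
      ∑ s, φ s * canonR M s ≤ ε * (M - 1) / (1 + 2 * ε) := by
  obtain ⟨hε0, hε1⟩ := hε
  have hden : 0 < 1 + 2 * ε := by linarith
  have hden' : (1 + 2 * ε) ≠ 0 := ne_of_gt hden
  refine ⟨⟨?_, ?_, ?_⟩, ?_, ?_⟩
  · intro s
    fin_cases s <;> simp <;> positivity
  · simp [Fin.sum_univ_three]
    field_simp
    ring
  · intro s'
    fin_cases s' <;>
      simp [canonP, Fin.sum_univ_three, Fintype.sum_bool] <;>
      field_simp <;> ring
  · simp [canonR, Fin.sum_univ_three]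
    field_simp
    ring
  · rintro π φ ⟨hπ0, hπ1⟩ ⟨hφ0, hsum, hstat⟩
    have h0 := hstat 0
    have h1 := hstat 1
    have h2 := hstat 2
    simp [canonP, Fin.sum_univ_three, Fintype.sum_bool] at h0 h1 h2
    have hp1 := hπ1 1
    simp [Fintype.sum_bool] at hp1
    have hπ1t := hπ0 1 true
    have hπ1f := hπ0 1 false
    have hφ0' := hφ0 0
    have hφ1' := hφ0 1
    have hφ2' := hφ0 2
    simp [canonR, Fin.sum_univ_three] at hsum ⊢
    -- key facts: φ2 = ε φ0, π1true * φ1 = ε φ0, φ1 ≥ ε φ0, φ0 ≤ 1/(1+2ε)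
    have hp0 := hπ1 0
    simp [Fintype.sum_bool] at hp0
    have h2' : ε * φ 0 = φ 2 := by nlinarith
    have hle : φ 2 ≤ φ 1 := by nlinarith [mul_nonneg hπ1f hφ1']
    have hs : ε * (φ 0 + φ 1 + φ 2) = ε := by rw [hsum, mul_one]
    have e1 : (φ 2 * M - φ 1) * (1 + 2 * ε) ≤ (φ 2 * M - φ 2) * (1 + 2 * ε) := by
      nlinarith [mul_nonneg (sub_nonneg.2 hle) hden.le]
    have e3 : φ 2 * (1 + 2 * ε) ≤ ε := by
      nlinarith [mul_nonneg hε0.le (sub_nonneg.2 hle)]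
    have e4 := mul_le_mul_of_nonneg_left e3 (by linarith : (0:ℝ) ≤ M - 1)
    have key : (φ 2 * M - φ 1) * (1 + 2 * ε) ≤ ε * (M - 1) := by nlinarith [e1, e4]
    rw [← sub_le_iff_le_add', le_div_iff₀ hden]
    linarith [key]
end

section
/- In the canonical MDP, if r̂ : {1,2,3} → ℝ satisfies r̂(2) > r̂(1) and r̂(2) > (r̂(1) + ε·r̂(3))/(1+ε), then any policy maximizing average r̂-reward stays forever in state 2 once reached, and its average reward under the true reward r is −1. -/
/-- Conditions for severe misalignment: if `r̂(2) > r̂(1)` and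
`r̂(2) > (r̂(1) + ε r̂(3))/(1+ε)`, then any stationary distribution maximizing average
`r̂`-reward over all policies concentrates on state 2 (the agent stays forever at the
instrumental goal), so its average true reward is `-1`. -/
theorem severe_misalignment_conditions
    (ε M : ℝ) (hε : ε ∈ Set.Ioo (0 : ℝ) 1)
    (rhat : Fin 3 → ℝ)
    (h1 : rhat 1 > rhat 0)
    (h2 : rhat 1 > (rhat 0 + ε * rhat 2) / (1 + ε))
    (φhat : Fin 3 → ℝ)
    (hfeas : ∃ π, IsPolicy π ∧ IsStationaryCanon ε π φhat)
    (hmax : ∀ π φ, IsPolicy π → IsStationaryCanon ε π φ →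
      ∑ s, φ s * rhat s ≤ ∑ s, φhat s * rhat s) :
    φhat 1 = 1 ∧ ∑ s, φhat s * canonR M s = -1 := by

  obtain ⟨hε0, hε1⟩ := hε
  obtain ⟨π, hπ, hnn, hsum, hst⟩ := hfeas
  -- stationary equation at s' = 0 gives φhat 2 = ε * φhat 0
  have hπ0 := hπ.2 0
  have hπ2 := hπ.2 2
  simp [Fintype.sum_bool] at hπ0 hπ2
  have h0 := hst 0
  rw [Fin.sum_univ_three] at h0
  simp [canonP, Fintype.sum_bool] at h0
  have h0' : φhat 0 * (1 - ε) + φhat 2 = φhat 0 := by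
    linear_combination h0 - (1 - ε) * φhat 0 * hπ0 - φhat 2 * hπ2
  have hz : φhat 2 = ε * φhat 0 := by linarith
  rw [Fin.sum_univ_three] at hsum
  -- the stay-policy with distribution concentrated at state 1
  have hkey := hmax (fun _ a => if a then 0 else 1) ![0, 1, 0]
    ⟨fun s a => by cases a <;> simp, fun s => by simp [Fintype.sum_bool]⟩
    ⟨fun s => by fin_cases s <;> simp, by simp [Fin.sum_univ_three],
      fun s' => by
        fin_cases s' <;>
          simp [Fin.sum_univ_three, Fintype.sum_bool, canonP]⟩
  rw [Fin.sum_univ_three, Fin.sum_univ_three] at hkey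
  simp at hkey
  have hmul : (rhat 0 + ε * rhat 2) < (1 + ε) * rhat 1 := by
    have h1ε : (0:ℝ) < 1 + ε := by linarith
    calc rhat 0 + ε * rhat 2 = (1 + ε) * ((rhat 0 + ε * rhat 2) / (1 + ε)) := by
          field_simp
      _ < (1 + ε) * rhat 1 := by exact (mul_lt_mul_iff_right₀ h1ε).2 h2
  have hx0 : 0 ≤ φhat 0 := hnn 0
  have hx : φhat 0 = 0 := by
    by_contra h
    have hxp : 0 < φhat 0 := lt_of_le_of_ne hx0 (Ne.symm h)
    have hy' : φhat 1 = 1 - φhat 0 - ε * φhat 0 := by linarith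
    have e1 : φhat 0 * rhat 0 + φhat 1 * rhat 1 + φhat 2 * rhat 2
        = rhat 1 + (φhat 0 * (rhat 0 + ε * rhat 2) - φhat 0 * ((1 + ε) * rhat 1)) := by
      rw [hz, hy']; ring
    rw [e1] at hkey
    nlinarith [mul_lt_mul_of_pos_left hmul hxp]
  have hy : φhat 1 = 1 := by
    have := hz
    rw [hx] at this
    simp at this
    linarith [hsum, hx, this]
  refine ⟨hy, ?_⟩
  rw [Fin.sum_univ_three]
  have h2' : φhat 2 = 0 := by rw [hz, hx]; ring
  simp [canonR, hx, hy, h2']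
end

section
/- In the canonical MDP with ε < β_*/3 and M > 9/β_*² (β_* ∈ (0,1]), suppose r̂ conflates r and V_* with degree β ∈ [β_*, 1], i.e., c·r̂ + k·e = (1−β)·r + β·V_* with c > 0. Then r̂(3) − r̂(1) + (1+ε)(r̂(2) − r̂(3)) > 0, equivalently r̂(2) > (r̂(1) + ε·r̂(3))/(1+ε). -/
set_option maxHeartbeats 1000000 in
/-- Slight conflation induces severe misalignment in the canonical MDP: with
`ε < β_*/3` and `M > 9/β_*²`, any `r̂` conflating `r = (0, -1, M)` and `V_*` with degree
`β ∈ [β_*, 1]` satisfies `r̂(3) - r̂(1) + (1+ε)(r̂(2) - r̂(3)) > 0`, equivalently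
`r̂(2) > (r̂(1) + ε r̂(3))/(1+ε)`. States are indexed `0, 1, 2`. -/
theorem slight_conflation_severe_misalignment
    (ε M βstar β c k : ℝ)
    (hε : ε ∈ Set.Ioo (0 : ℝ) 1)
    (hβstar : βstar ∈ Set.Ioc (0 : ℝ) 1)
    (hεβ : ε < βstar / 3)
    (hM : M > 9 / βstar ^ 2)
    (hβ : β ∈ Set.Icc βstar 1)
    (hc : 0 < c)
    (r rhat V : Fin 3 → ℝ)
    (hr : r = ![0, -1, M])
    (hV31 : V 2 - V 0 = M - ε * (M - 1) / (1 + 2 * ε))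
    (hV23 : V 1 - V 2 = -1 - ε * (M - 1) / (1 + 2 * ε))
    (hconf : ∀ s, c * rhat s + k = (1 - β) * r s + β * V s) :
    rhat 2 - rhat 0 + (1 + ε) * (rhat 1 - rhat 2) > 0 ∧
    rhat 1 > (rhat 0 + ε * rhat 2) / (1 + ε) := by
  obtain ⟨hε0, hε1⟩ := hε
  obtain ⟨hbs0, hbs1⟩ := hβstar
  obtain ⟨hb1, hb2⟩ := hβ
  have h0 := hconf 0
  have h1 := hconf 1
  have h2 := hconf 2
  rw [hr] at h0 h1 h2
  simp [Matrix.cons_val_zero, Matrix.cons_val_one] at h0 h1 h2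
  set D : ℝ := ε * (M - 1) / (1 + 2 * ε) with hD
  have h2ε : (0:ℝ) < 1 + 2 * ε := by linarith
  have hDe : D * (1 + 2 * ε) = ε * (M - 1) := by
    rw [hD, div_mul_cancel₀ _ h2ε.ne']
  -- differences
  have d20 : c * (rhat 2 - rhat 0) = (1 - β) * M + β * (M - D) := by
    linear_combination h2 - h0 + β * hV31
  have d12 : c * (rhat 1 - rhat 2) = (1 - β) * (-1 - M) + β * (-1 - D) := by
    linear_combination h1 - h2 + β * hV23
  -- M is large and positive
  have hbs2 : 0 < βstar ^ 2 := by positivity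
  have hM9 : M * βstar ^ 2 > 9 := by
    have := (div_lt_iff₀ hbs2).mp hM
    linarith
  have hMpos : 0 < M := by nlinarith [sq_nonneg βstar]
  -- bound ε
  have hεb : ε < β / 3 := by linarith
  -- coefficient positivity
  have hβ0 : (0:ℝ) ≤ β := le_trans hbs0.le hb1
  have a1 : ε * (1 - β) < βstar / 3 := by nlinarith [mul_nonneg hε0.le hβ0]
  have hsq : ε ^ 2 < βstar ^ 2 / 9 := by nlinarith
  have a2 : ε ^ 2 * (2 - β) < 2 * βstar / 9 := by nlinarith [sq_nonneg ε]
  have hcoef : β - ε * (1 - β) - ε ^ 2 * (2 - β) > 4 / 9 * βstar := by linarith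
  have hcoefpos : 0 < β - ε * (1 - β) - ε ^ 2 * (2 - β) := by nlinarith
  have hMcoef : M * (β - ε * (1 - β) - ε ^ 2 * (2 - β)) > 4 := by
    have h1 : M * (β - ε * (1 - β) - ε ^ 2 * (2 - β)) > M * (4 / 9 * βstar) :=
      (mul_lt_mul_iff_right₀ hMpos).mpr hcoef
    have hMb : M * βstar ≥ 9 := by
      nlinarith [mul_nonneg (mul_nonneg hMpos.le hbs0.le) (by linarith : (0:ℝ) ≤ 1 - βstar)]
    have h2 : M * (4 / 9 * βstar) ≥ 4 := by nlinarith
    linarith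
  -- main inequality, multiplied through by (1+2ε)
  have key : c * (1 + 2 * ε) * (rhat 2 - rhat 0 + (1 + ε) * (rhat 1 - rhat 2)) > 0 := by
    have expand : c * (1 + 2 * ε) * (rhat 2 - rhat 0 + (1 + ε) * (rhat 1 - rhat 2)) =
        M * (β - ε * (1 - β) - ε ^ 2 * (2 - β)) - (1 + ε) * (1 + 2 * ε) + β * ε * (2 + ε) := by
      have e1 : c * (1 + 2 * ε) * (rhat 2 - rhat 0 + (1 + ε) * (rhat 1 - rhat 2)) =
          (1 + 2 * ε) * (c * (rhat 2 - rhat 0)) + (1 + ε) * ((1 + 2 * ε) * (c * (rhat 1 - rhat 2))) := by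
        ring
      rw [e1, d20, d12]
      linear_combination (-(β * (2 + ε))) * hDe
    rw [expand]
    have hεsmall : ε < 1 / 3 := by linarith
    have h4 : (1 + ε) * (1 + 2 * ε) < 4 := by nlinarith
    have h5 : 0 ≤ β * ε * (2 + ε) := by positivity
    linarith
  have hcpos : 0 < c * (1 + 2 * ε) := by positivity
  have main : rhat 2 - rhat 0 + (1 + ε) * (rhat 1 - rhat 2) > 0 := by
    by_contra h
    push_neg at h
    have := mul_nonpos_of_nonneg_of_nonpos hcpos.le h
    linarith
  refine ⟨main, ?_⟩
  rw [gt_iff_lt, div_lt_iff₀ (by linarith : (0:ℝ) < 1 + ε)]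
  linarith
end
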